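/- If μ({E}) > 0 and ∫_{(E,∞)} (x - E)^{-1} dμ(x) < ∞, then ∫_{(E,∞)} (x-E)^{-1} dμ(x) equals the limit as t → ∞ of [2 ∫₀ᵗ∫₀ˢ (Z_{t-s} Z_{s-r} Z_r / Z_t) dr ds − (∫₀ᵗ (Z_{t-s} Z_s / Z_t) ds)²] / [2 ∫₀ᵗ (Z_{t-s} Z_s / Z_t) ds]. -/

import Mathlib

open MeasureTheory Real Set Filter intervalIntegral

/-- Laplace transform of a measure on ℝ. -/
noncomputable def lapZ (μ : Measure ℝ) (t : ℝ) : ℝ := ∫ x, Real.exp (-t * x) ∂μ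

namespace Stmt6

/-- tail part of the shifted Laplace transform -/
noncomputable def Rf (μ : Measure ℝ) (E t : ℝ) : ℝ :=
  ∫ x in Set.Ioi E, Real.exp (-(max t 0 * (x - E))) ∂μ

variable {μ : Measure ℝ} {E : ℝ}

lemma intOn [IsFiniteMeasure μ] {f : ℝ → ℝ} {C : ℝ}
    (hm : AEStronglyMeasurable f (μ.restrict (Ioi E)))
    (hb : ∀ x ∈ Ioi E, |f x| ≤ C) : IntegrableOn f (Ioi E) μ :=
  Integrable.mono' (integrable_const C) hm
    ((ae_restrict_iff' measurableSet_Ioi).2 (ae_of_all _ hb))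

lemma integrableOn_exp [IsFiniteMeasure μ] (t : ℝ) :
    IntegrableOn (fun x => Real.exp (-(max t 0 * (x - E)))) (Ioi E) μ := by
  refine intOn (C := 1) (Continuous.aestronglyMeasurable (by continuity)) (fun x hx => ?_)
  rw [abs_of_pos (exp_pos _)]
  refine exp_le_one_iff.2 (neg_nonpos.2 (mul_nonneg (le_max_right _ _) ?_))
  simp only [mem_Ioi] at hx; linarith

lemma Rf_nonneg (t : ℝ) : 0 ≤ Rf μ E t :=
  setIntegral_nonneg measurableSet_Ioi (fun x _ => (exp_pos _).le)

lemma Rf_le_one [IsProbabilityMeasure μ] (t : ℝ) : Rf μ E t ≤ 1 := by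
  have h1 : Rf μ E t ≤ ∫ _ in Ioi E, (1:ℝ) ∂μ := by
    refine setIntegral_mono_on (integrableOn_exp t) (integrableOn_const ?_)
      measurableSet_Ioi (fun x hx => ?_)
    · exact measure_ne_top _ _
    · refine exp_le_one_iff.2 (neg_nonpos.2 (mul_nonneg (le_max_right _ _) ?_))
      simp only [mem_Ioi] at hx; linarith
  calc Rf μ E t ≤ ∫ _ in Ioi E, (1:ℝ) ∂μ := h1
    _ = (μ (Ioi E)).toReal := by simp; rfl
    _ ≤ 1 := by
        have := prob_le_one (μ := μ) (s := Ioi E)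
        exact ENNReal.toReal_le_of_le_ofReal zero_le_one (by simpa using this)

lemma Rf_anti [IsFiniteMeasure μ] : Antitone (Rf μ E) := by
  intro t1 t2 h
  refine setIntegral_mono_on (integrableOn_exp t2) (integrableOn_exp t1)
    measurableSet_Ioi (fun x hx => ?_)
  simp only [mem_Ioi] at hx
  exact exp_le_exp.2 (neg_le_neg (mul_le_mul_of_nonneg_right
    (max_le_max h le_rfl) (by linarith)))

lemma Rf_stronglyMeasurable [IsFiniteMeasure μ] : StronglyMeasurable (Rf μ E) := by
  have : Continuous (fun p : ℝ × ℝ => Real.exp (-(max p.1 0 * (p.2 - E)))) := by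
    continuity
  exact this.stronglyMeasurable.integral_prod_right'

lemma Rf_measurable [IsFiniteMeasure μ] : Measurable (Rf μ E) :=
  Rf_stronglyMeasurable.measurable

lemma Rf_intervalIntegrable [IsFiniteMeasure μ] (c d : ℝ) :
    IntervalIntegrable (Rf μ E) volume c d :=
  (Rf_anti.antitoneOn _).intervalIntegrable

variable {μ : Measure ℝ} {E : ℝ}

lemma exp_bound_aux {t c : ℝ} (ht : 0 ≤ t) (hc : 0 < c) : t * Real.exp (-(t * c)) ≤ c⁻¹ := by
  have h1 : t * c ≤ Real.exp (t * c) := by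
    have := Real.add_one_le_exp (t * c); linarith
  rw [Real.exp_neg, mul_inv_le_iff₀ (exp_pos _)]
  calc t = c⁻¹ * (t * c) := by field_simp
    _ ≤ c⁻¹ * Real.exp (t*c) := mul_le_mul_of_nonneg_left h1 (inv_nonneg.2 hc.le)

lemma tendsto_Rf [IsFiniteMeasure μ] : Tendsto (Rf μ E) atTop (nhds 0) := by
  have H : Tendsto (Rf μ E) atTop (nhds (∫ x in Ioi E, (fun _ : ℝ => (0:ℝ)) x ∂μ)) := by
    refine tendsto_integral_filter_of_dominated_convergence (fun _ => (1:ℝ))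
      (Eventually.of_forall (fun t => (Continuous.aestronglyMeasurable (by continuity))))
      (Eventually.of_forall (fun t => ?_)) (integrable_const 1) ?_
    · refine (ae_restrict_iff' measurableSet_Ioi).2 (ae_of_all _ (fun x hx => ?_))
      simp only [Real.norm_eq_abs]
      rw [abs_of_pos (exp_pos _)]
      refine exp_le_one_iff.2 (neg_nonpos.2 (mul_nonneg (le_max_right _ _) ?_))
      simp only [mem_Ioi] at hx; linarith
    · refine (ae_restrict_iff' measurableSet_Ioi).2 (ae_of_all _ (fun x hx => ?_))
      simp only [mem_Ioi] at hx
      have hc : (0:ℝ) < x - E := by linarith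
      have h1 : Tendsto (fun t : ℝ => max t 0 * (x - E)) atTop atTop :=
        (tendsto_atTop_mono (fun t => le_max_left t 0) tendsto_id).atTop_mul_const hc
      exact tendsto_exp_neg_atTop_nhds_zero.comp h1
  simpa using H

lemma tendsto_t_Rf [IsFiniteMeasure μ]
    (hint : IntegrableOn (fun x => (x - E)⁻¹) (Set.Ioi E) μ) :
    Tendsto (fun t => t * Rf μ E t) atTop (nhds 0) := by
  have heq : ∀ t : ℝ, t * Rf μ E t
      = ∫ x in Ioi E, t * Real.exp (-(max t 0 * (x - E))) ∂μ := by
    intro t; rw [Rf]; exact (MeasureTheory.integral_const_mul t _).symm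
  have H : Tendsto (fun t => ∫ x in Ioi E, t * Real.exp (-(max t 0 * (x - E))) ∂μ)
      atTop (nhds (∫ x in Ioi E, (fun _ : ℝ => (0:ℝ)) x ∂μ)) := by
    refine tendsto_integral_filter_of_dominated_convergence (fun x => (x - E)⁻¹)
      (Eventually.of_forall (fun t => (Continuous.aestronglyMeasurable
        (continuous_const.mul (by fun_prop)))))
      ?_ hint ?_
    · filter_upwards [eventually_ge_atTop (0:ℝ)] with t ht
      refine (ae_restrict_iff' measurableSet_Ioi).2 (ae_of_all _ (fun x hx => ?_))
      simp only [mem_Ioi] at hx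
      have hc : (0:ℝ) < x - E := by linarith
      rw [max_eq_left ht, Real.norm_eq_abs, abs_of_nonneg (mul_nonneg ht (exp_pos _).le)]
      exact exp_bound_aux ht hc
    · refine (ae_restrict_iff' measurableSet_Ioi).2 (ae_of_all _ (fun x hx => ?_))
      simp only [mem_Ioi] at hx
      have hc : (0:ℝ) < x - E := by linarith
      have h1 : Tendsto (fun t : ℝ => t * Real.exp (-(t * (x-E)))) atTop (nhds 0) := by
        have h0' : Tendsto (fun t : ℝ => t * (x-E)) atTop atTop := tendsto_id.atTop_mul_const hc
        have h1' : Tendsto (fun t : ℝ => (t*(x-E)) * Real.exp (-(t*(x-E)))) atTop (nhds 0) := by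
          have := (tendsto_pow_mul_exp_neg_atTop_nhds_zero 1).comp h0'
          simpa [Function.comp_def] using this
        have h2 := h1'.const_mul (x-E)⁻¹
        rw [mul_zero] at h2
        refine h2.congr (fun t => ?_)
        field_simp
      refine h1.congr' ?_
      filter_upwards [eventually_ge_atTop (0:ℝ)] with t ht
      rw [max_eq_left ht]
  have H2 := H.congr' (Eventually.of_forall (fun t => (heq t).symm))
  simpa using H2


lemma exp_integral_Ioc {t c : ℝ} (ht : 0 ≤ t) (hc : 0 < c) :
    ∫ s in Set.Ioc (0:ℝ) t, Real.exp (-(s * c)) = (1 - Real.exp (-(t * c))) / c := by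
  rw [← intervalIntegral.integral_of_le ht]
  have hder : ∀ s ∈ Set.uIcc (0:ℝ) t, HasDerivAt (fun u : ℝ => -Real.exp (-(u * c)) / c)
      (Real.exp (-(s * c))) s := by
    intro s _
    have h1 : HasDerivAt (fun u : ℝ => -(u * c)) (-c) s := by
      have := ((hasDerivAt_id s).mul_const c).neg; simp only [one_mul] at this; exact this
    have h2 := (h1.exp.div_const c).neg
    have h3 : -(Real.exp (-(s * c)) * -c / c) = Real.exp (-(s * c)) := by
      field_simp
    rw [show (fun u : ℝ => -Real.exp (-(u * c)) / c)
        = (fun u : ℝ => -(Real.exp (-(u * c)) / c)) from funext (fun u => by ring)]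
    exact h3 ▸ h2
  rw [intervalIntegral.integral_eq_sub_of_hasDerivAt hder
    (((by continuity : Continuous fun x : ℝ => Real.exp (-(x * c)))).intervalIntegrable _ _)]
  simp [Real.exp_zero]
  ring

/-- primitive of `Rf` -/
noncomputable def I1 (μ : Measure ℝ) (E t : ℝ) : ℝ := ∫ s in (0:ℝ)..t, Rf μ E s

lemma I1_mono [IsFiniteMeasure μ] : Monotone (I1 μ E) := by
  intro t1 t2 h
  have hadd := intervalIntegral.integral_add_adjacent_intervals
    (Rf_intervalIntegrable (μ := μ) (E := E) 0 t1) (Rf_intervalIntegrable t1 t2)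
  rw [I1, I1, ← hadd]
  exact le_add_of_nonneg_right (intervalIntegral.integral_nonneg h (fun s _ => Rf_nonneg s))

lemma I1_nonneg [IsFiniteMeasure μ] {t : ℝ} (ht : 0 ≤ t) : 0 ≤ I1 μ E t :=
  intervalIntegral.integral_nonneg ht (fun s _ => Rf_nonneg s)

lemma I1_eq [IsFiniteMeasure μ] {t : ℝ} (ht : 0 ≤ t) :
    I1 μ E t = ∫ x in Ioi E, (1 - Real.exp (-(t * (x - E)))) / (x - E) ∂μ := by
  have h1 : I1 μ E t = ∫ s in Ioc (0:ℝ) t, (∫ x in Ioi E, Real.exp (-(s * (x - E))) ∂μ) := by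
    rw [I1, intervalIntegral.integral_of_le ht]
    refine setIntegral_congr_fun measurableSet_Ioc (fun s hs => ?_)
    rw [Rf, max_eq_left hs.1.le]
  have hswap : (∫ s in Ioc (0:ℝ) t, (∫ x in Ioi E, Real.exp (-(s * (x - E))) ∂μ))
      = ∫ x in Ioi E, (∫ s in Ioc (0:ℝ) t, Real.exp (-(s * (x - E)))) ∂μ := by
    haveI : IsFiniteMeasure ((volume : Measure ℝ).restrict (Ioc (0:ℝ) t)) := ⟨by
      rw [Measure.restrict_apply_univ]; exact measure_Ioc_lt_top⟩
    apply MeasureTheory.integral_integral_swap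
    have hcont : Continuous (Function.uncurry fun (s x : ℝ) => Real.exp (-(s * (x - E)))) := by
      have huc : (Function.uncurry fun (s x : ℝ) => Real.exp (-(s * (x - E))))
          = fun p : ℝ × ℝ => Real.exp (-(p.1 * (p.2 - E))) := rfl
      rw [huc]; fun_prop
    refine Integrable.mono' (integrable_const (1:ℝ)) hcont.aestronglyMeasurable ?_
    rw [Measure.prod_restrict]
    refine (ae_restrict_iff' (measurableSet_Ioc.prod measurableSet_Ioi)).2 (ae_of_all _ ?_)
    rintro ⟨s, x⟩ ⟨hs, hx⟩
    simp only [Function.uncurry, Real.norm_eq_abs]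
    rw [abs_of_pos (exp_pos _)]
    simp only [mem_Ioi] at hx
    exact exp_le_one_iff.2 (neg_nonpos.2 (mul_nonneg hs.1.le (by linarith)))
  rw [h1, hswap]
  refine setIntegral_congr_fun measurableSet_Ioi (fun x hx => ?_)
  simp only [mem_Ioi] at hx
  exact exp_integral_Ioc ht (by linarith)

lemma integrableOn_I1_integrand [IsFiniteMeasure μ]
    (hint : IntegrableOn (fun x => (x - E)⁻¹) (Set.Ioi E) μ) {t : ℝ} (ht : 0 ≤ t) :
    IntegrableOn (fun x => (1 - Real.exp (-(t * (x - E)))) / (x - E)) (Ioi E) μ := by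
  refine Integrable.mono' hint (Measurable.aestronglyMeasurable (by measurability)) ?_
  refine (ae_restrict_iff' measurableSet_Ioi).2 (ae_of_all _ (fun x hx => ?_))
  simp only [mem_Ioi] at hx
  have hc : (0:ℝ) < x - E := by linarith
  have he1 : Real.exp (-(t * (x - E))) ≤ 1 :=
    exp_le_one_iff.2 (neg_nonpos.2 (mul_nonneg ht hc.le))
  have he0 : 0 ≤ Real.exp (-(t * (x - E))) := (exp_pos _).le
  rw [Real.norm_eq_abs, abs_of_nonneg (div_nonneg (by linarith) hc.le), inv_eq_one_div]
  gcongr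
  linarith

lemma I1_le [IsFiniteMeasure μ]
    (hint : IntegrableOn (fun x => (x - E)⁻¹) (Set.Ioi E) μ) {t : ℝ} (ht : 0 ≤ t) :
    I1 μ E t ≤ ∫ x in Ioi E, (x - E)⁻¹ ∂μ := by
  rw [I1_eq ht]
  refine setIntegral_mono_on (integrableOn_I1_integrand hint ht) hint
    measurableSet_Ioi (fun x hx => ?_)
  simp only [mem_Ioi] at hx
  have hc : (0:ℝ) < x - E := by linarith
  rw [inv_eq_one_div]
  gcongr
  linarith [Real.exp_pos (-(t * (x - E)))]

lemma tendsto_I1 [IsFiniteMeasure μ]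
    (hint : IntegrableOn (fun x => (x - E)⁻¹) (Set.Ioi E) μ) :
    Tendsto (I1 μ E) atTop (nhds (∫ x in Ioi E, (x - E)⁻¹ ∂μ)) := by
  have H : Tendsto (fun t => ∫ x in Ioi E, (1 - Real.exp (-(t * (x - E)))) / (x - E) ∂μ)
      atTop (nhds (∫ x in Ioi E, (x - E)⁻¹ ∂μ)) := by
    refine tendsto_integral_filter_of_dominated_convergence (fun x => (x - E)⁻¹)
      (Eventually.of_forall (fun t => Measurable.aestronglyMeasurable (by measurability)))
      ?_ hint ?_
    · filter_upwards [eventually_ge_atTop (0:ℝ)] with t ht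
      refine (ae_restrict_iff' measurableSet_Ioi).2 (ae_of_all _ (fun x hx => ?_))
      simp only [mem_Ioi] at hx
      have hc : (0:ℝ) < x - E := by linarith
      have he1 : Real.exp (-(t * (x - E))) ≤ 1 :=
        exp_le_one_iff.2 (neg_nonpos.2 (mul_nonneg ht hc.le))
      rw [Real.norm_eq_abs, abs_of_nonneg (div_nonneg (by linarith [Real.exp_pos (-(t * (x-E)))]) hc.le)]
      rw [div_le_iff₀ hc, inv_mul_cancel₀ hc.ne']
      linarith [Real.exp_pos (-(t * (x - E)))]
    · refine (ae_restrict_iff' measurableSet_Ioi).2 (ae_of_all _ (fun x hx => ?_))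
      simp only [mem_Ioi] at hx
      have hc : (0:ℝ) < x - E := by linarith
      have h1 : Tendsto (fun t : ℝ => t * (x - E)) atTop atTop := tendsto_id.atTop_mul_const hc
      have h2 : Tendsto (fun t : ℝ => Real.exp (-(t * (x-E)))) atTop (nhds 0) :=
        tendsto_exp_neg_atTop_nhds_zero.comp h1
      have h3 := ((tendsto_const_nhds (x := (1:ℝ))).sub h2).div_const (x - E)
      rw [sub_zero, ← inv_eq_one_div] at h3
      exact h3
  refine H.congr' ?_
  filter_upwards [eventually_ge_atTop (0:ℝ)] with t ht
  exact (I1_eq ht).symm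


/-- interval integrability from measurability + boundedness -/
lemma intervalIntegrable_of_bdd {f : ℝ → ℝ} {C a b : ℝ}
    (hm : AEStronglyMeasurable f (volume.restrict (Set.uIoc a b)))
    (hb : ∀ s ∈ Set.uIoc a b, |f s| ≤ C) : IntervalIntegrable f volume a b := by
  rw [intervalIntegrable_iff]
  haveI : IsFiniteMeasure ((volume : Measure ℝ).restrict (Set.uIoc a b)) := ⟨by
    rw [Measure.restrict_apply_univ, Set.uIoc]; exact measure_Ioc_lt_top⟩
  exact Integrable.mono' (integrable_const C) hm
    ((ae_restrict_iff' measurableSet_uIoc).2 (ae_of_all _ hb))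

/-- the convolution square of Rf -/
noncomputable def Sf (μ : Measure ℝ) (E t : ℝ) : ℝ :=
  ∫ s in Set.Ioc (0:ℝ) t, Rf μ E (t - s) * Rf μ E s

lemma Sf_measurable [IsFiniteMeasure μ] : Measurable (Sf μ E) := by
  have hset : MeasurableSet {p : ℝ × ℝ | p.2 ∈ Set.Ioc 0 p.1} := by
    have : {p : ℝ × ℝ | p.2 ∈ Set.Ioc 0 p.1}
        = {p : ℝ × ℝ | (0:ℝ) < p.2} ∩ {p : ℝ × ℝ | p.2 ≤ p.1} := by
      ext p; simp [Set.mem_Ioc, and_comm]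
    rw [this]
    exact (measurableSet_lt measurable_const measurable_snd).inter
      (measurableSet_le measurable_snd measurable_fst)
  have hfm : Measurable fun p : ℝ × ℝ => Rf μ E (p.1 - p.2) * Rf μ E p.2 :=
    (Rf_measurable.comp (measurable_fst.sub measurable_snd)).mul
      (Rf_measurable.comp measurable_snd)
  have h : Sf μ E = fun t => ∫ s,
      ({p : ℝ × ℝ | p.2 ∈ Set.Ioc 0 p.1}.indicator
        (fun p => Rf μ E (p.1 - p.2) * Rf μ E p.2)) (t, s) := by
    funext t
    rw [Sf, ← MeasureTheory.integral_indicator measurableSet_Ioc]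
    refine integral_congr_ae (ae_of_all _ (fun s => ?_))
    by_cases hs : s ∈ Set.Ioc (0:ℝ) t
    · simp only [Set.indicator_of_mem hs,
        Set.indicator_of_mem (show (t,s) ∈ {p : ℝ × ℝ | p.2 ∈ Set.Ioc 0 p.1} from hs)]
    · simp only [Set.indicator_of_notMem hs,
        Set.indicator_of_notMem (show (t,s) ∉ {p : ℝ × ℝ | p.2 ∈ Set.Ioc 0 p.1} from hs)]
  rw [h]
  exact ((hfm.indicator hset).stronglyMeasurable.integral_prod_right').measurable

lemma Sf_nonneg (t : ℝ) : 0 ≤ Sf μ E t :=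
  setIntegral_nonneg measurableSet_Ioc
    (fun s _ => mul_nonneg (Rf_nonneg _) (Rf_nonneg _))

lemma Rf_comp_sub_intervalIntegrable [IsFiniteMeasure μ] (t a b : ℝ) :
    IntervalIntegrable (fun s => Rf μ E (t - s)) volume a b := by
  have hmono : Monotone fun s => Rf μ E (t - s) :=
    fun s1 s2 h => Rf_anti (by linarith)
  exact (hmono.monotoneOn _).intervalIntegrable

lemma RR_intervalIntegrable [IsProbabilityMeasure μ] (t a b : ℝ) :
    IntervalIntegrable (fun s => Rf μ E (t - s) * Rf μ E s) volume a b := by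
  refine intervalIntegrable_of_bdd (C := 1)
    ((((Rf_measurable (μ := μ) (E := E)).comp (measurable_const.sub measurable_id)).mul
      (Rf_measurable (μ := μ) (E := E))).aestronglyMeasurable) (fun s _ => ?_)
  rw [abs_of_nonneg (mul_nonneg (Rf_nonneg _) (Rf_nonneg _))]
  exact mul_le_one₀ (Rf_le_one _) (Rf_nonneg _) (Rf_le_one _)

lemma Sf_eq_interval {t : ℝ} (ht : 0 ≤ t) :
    Sf μ E t = ∫ s in (0:ℝ)..t, Rf μ E (t - s) * Rf μ E s := by
  rw [Sf, intervalIntegral.integral_of_le ht]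

lemma Sf_le_I1 [IsProbabilityMeasure μ] {t : ℝ} (ht : 0 ≤ t) : Sf μ E t ≤ I1 μ E t := by
  rw [Sf_eq_interval ht, I1]
  refine intervalIntegral.integral_mono_on ht (RR_intervalIntegrable t 0 t)
    (Rf_intervalIntegrable 0 t) (fun s _ => ?_)
  exact mul_le_of_le_one_left (Rf_nonneg s) (Rf_le_one _)

lemma tendsto_Sf [IsProbabilityMeasure μ]
    (hint : IntegrableOn (fun x => (x - E)⁻¹) (Set.Ioi E) μ) :
    Tendsto (Sf μ E) atTop (nhds 0) := by
  set Itot := ∫ x in Ioi E, (x - E)⁻¹ ∂μ with hItot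
  have hI0 : 0 ≤ Itot := setIntegral_nonneg measurableSet_Ioi
    (fun x hx => inv_nonneg.2 (by simp only [mem_Ioi] at hx; linarith))
  have hg : Tendsto (fun t : ℝ => 2 * (Rf μ E (t/2) * Itot)) atTop (nhds 0) := by
    have h1 : Tendsto (fun t : ℝ => t / 2) atTop atTop := tendsto_id.atTop_div_const two_pos
    have := (((tendsto_Rf (μ := μ) (E := E)).comp h1).mul_const Itot).const_mul 2
    simpa using this
  refine squeeze_zero' (Eventually.of_forall (fun t => Sf_nonneg t)) ?_ hg
  filter_upwards [eventually_ge_atTop (0:ℝ)] with t ht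
  have h2 : (0:ℝ) ≤ t/2 := by linarith
  have h2t : t/2 ≤ t := by linarith
  have hsplit : Sf μ E t = (∫ s in (0:ℝ)..(t/2), Rf μ E (t - s) * Rf μ E s)
      + ∫ s in (t/2)..t, Rf μ E (t - s) * Rf μ E s := by
    rw [Sf_eq_interval ht,
      ← intervalIntegral.integral_add_adjacent_intervals
        (RR_intervalIntegrable t 0 (t/2)) (RR_intervalIntegrable t (t/2) t)]
  have hb1 : (∫ s in (0:ℝ)..(t/2), Rf μ E (t - s) * Rf μ E s) ≤ Rf μ E (t/2) * Itot := by
    have step : (∫ s in (0:ℝ)..(t/2), Rf μ E (t - s) * Rf μ E s)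
        ≤ ∫ s in (0:ℝ)..(t/2), Rf μ E (t/2) * Rf μ E s := by
      refine intervalIntegral.integral_mono_on h2 (RR_intervalIntegrable t 0 (t/2))
        ((Rf_intervalIntegrable 0 (t/2)).const_mul _) (fun s hs => ?_)
      exact mul_le_mul_of_nonneg_right (Rf_anti (by linarith [hs.2])) (Rf_nonneg s)
    rw [intervalIntegral.integral_const_mul] at step
    calc (∫ s in (0:ℝ)..(t/2), Rf μ E (t - s) * Rf μ E s)
        ≤ Rf μ E (t/2) * I1 μ E (t/2) := step
      _ ≤ Rf μ E (t/2) * Itot :=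
          mul_le_mul_of_nonneg_left (I1_le hint h2) (Rf_nonneg _)
  have hb2 : (∫ s in (t/2)..t, Rf μ E (t - s) * Rf μ E s) ≤ Itot * Rf μ E (t/2) := by
    have step : (∫ s in (t/2)..t, Rf μ E (t - s) * Rf μ E s)
        ≤ ∫ s in (t/2)..t, Rf μ E (t - s) * Rf μ E (t/2) := by
      refine intervalIntegral.integral_mono_on h2t (RR_intervalIntegrable t (t/2) t)
        ((Rf_comp_sub_intervalIntegrable t (t/2) t).mul_const _) (fun s hs => ?_)
      exact mul_le_mul_of_nonneg_left (Rf_anti hs.1) (Rf_nonneg _)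
    rw [intervalIntegral.integral_mul_const] at step
    have hcomp : (∫ s in (t/2)..t, Rf μ E (t - s)) = I1 μ E (t/2) := by
      rw [intervalIntegral.integral_comp_sub_left (Rf μ E) t,
        show t - t = (0:ℝ) from by ring, show t - t/2 = t/2 from by ring, I1]
    rw [hcomp] at step
    calc (∫ s in (t/2)..t, Rf μ E (t - s) * Rf μ E s)
        ≤ I1 μ E (t/2) * Rf μ E (t/2) := step
      _ ≤ Itot * Rf μ E (t/2) :=
          mul_le_mul_of_nonneg_right (I1_le hint h2) (Rf_nonneg _)
  rw [hsplit]; linarith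

/-- Cesàro mean lemma for integrals -/
lemma cesaro {f : ℝ → ℝ} {C L : ℝ}
    (hii : ∀ a b : ℝ, 0 ≤ a → a ≤ b → IntervalIntegrable f volume a b)
    (hb : ∀ s : ℝ, 0 ≤ s → |f s| ≤ C)
    (hL : Tendsto f atTop (nhds L)) :
    Tendsto (fun t => (∫ s in (0:ℝ)..t, f s) / t) atTop (nhds L) := by
  have tri : ∀ x y : ℝ, |x - y| ≤ |x| + |y| := fun x y => by
    rw [sub_eq_add_neg]
    exact (abs_add_le x (-y)).trans_eq (by rw [abs_neg])
  rw [Metric.tendsto_atTop] at hL ⊢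
  intro ε hε
  obtain ⟨T0, hT0⟩ := hL (ε/2) (by linarith)
  set T := max T0 0 with hTdef
  have hT0' : (0:ℝ) ≤ T := le_max_right _ _
  have hC : 0 ≤ C := le_trans (abs_nonneg _) (hb 0 le_rfl)
  set M := (C + |L|) * T with hMdef
  have hM0 : 0 ≤ M := mul_nonneg (by positivity) hT0'
  refine ⟨max (max T 1) (2*M/ε + 1), fun t ht => ?_⟩
  have ht1 : (1:ℝ) ≤ t := le_trans (le_trans (le_max_right T 1) (le_max_left _ _)) ht
  have htT : T ≤ t := le_trans (le_trans (le_max_left T 1) (le_max_left _ _)) ht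
  have htM : 2*M/ε + 1 ≤ t := le_trans (le_max_right _ _) ht
  have ht0 : (0:ℝ) < t := by linarith
  have hsplit : (∫ s in (0:ℝ)..t, f s) = (∫ s in (0:ℝ)..T, f s) + ∫ s in T..t, f s :=
    (intervalIntegral.integral_add_adjacent_intervals (hii 0 T le_rfl hT0')
      (hii T t hT0' htT)).symm
  have h1 : |∫ s in (0:ℝ)..T, f s| ≤ C * T := by
    have hh := intervalIntegral.norm_integral_le_of_norm_le_const
      (C := C) (f := f) (a := 0) (b := T) ?_
    · simpa [abs_of_nonneg hT0'] using hh
    · intro x hx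
      rw [Set.uIoc_of_le hT0'] at hx
      simpa [Real.norm_eq_abs] using hb x hx.1.le
  have h2 : |(∫ s in T..t, f s) - L * (t - T)| ≤ ε/2 * (t - T) := by
    have heq : (∫ s in T..t, f s) - L*(t-T) = ∫ s in T..t, (f s - L) := by
      rw [intervalIntegral.integral_sub (hii T t hT0' htT) intervalIntegrable_const]
      simp [intervalIntegral.integral_const]
      ring
    rw [heq]
    have hh := intervalIntegral.norm_integral_le_of_norm_le_const
      (C := ε/2) (f := fun s => f s - L) (a := T) (b := t) ?_
    · simpa [abs_of_nonneg (by linarith : (0:ℝ) ≤ t - T)] using hh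
    · intro x hx
      rw [Set.uIoc_of_le htT] at hx
      have hd : dist (f x) L < ε/2 :=
        hT0 x (le_trans (le_max_left T0 0) hx.1.le)
      rw [Real.dist_eq] at hd
      simpa [Real.norm_eq_abs] using hd.le
  have key : |(∫ s in (0:ℝ)..t, f s) - L * t| ≤ M + ε/2 * t := by
    have hrw : (∫ s in (0:ℝ)..t, f s) - L*t
        = ((∫ s in (0:ℝ)..T, f s) + ((∫ s in T..t, f s) - L*(t-T))) - L*T := by
      rw [hsplit]; ring
    rw [hrw]
    have hLT : |L * T| = |L| * T := by rw [abs_mul, abs_of_nonneg hT0']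
    calc |((∫ s in (0:ℝ)..T, f s) + ((∫ s in T..t, f s) - L*(t-T))) - L*T|
        ≤ |(∫ s in (0:ℝ)..T, f s) + ((∫ s in T..t, f s) - L*(t-T))| + |L * T| := tri _ _
      _ ≤ (|∫ s in (0:ℝ)..T, f s| + |(∫ s in T..t, f s) - L*(t-T)|) + |L * T| := by
          linarith [abs_add_le (∫ s in (0:ℝ)..T, f s) ((∫ s in T..t, f s) - L*(t-T))]
      _ ≤ C*T + ε/2*(t-T) + |L| * T := by rw [hLT]; linarith
      _ ≤ M + ε/2 * t := by rw [hMdef]; nlinarith [hε.le, hT0']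
  rw [Real.dist_eq]
  have hrw2 : (∫ s in (0:ℝ)..t, f s)/t - L = ((∫ s in (0:ℝ)..t, f s) - L*t)/t := by
    field_simp
  rw [hrw2, abs_div, abs_of_pos ht0, div_lt_iff₀ ht0]
  have hεt : ε * (2*M/ε + 1) = 2*M + ε := by field_simp
  have h5 : ε * (2*M/ε + 1) ≤ ε * t := mul_le_mul_of_nonneg_left htM hε.le
  calc |(∫ s in (0:ℝ)..t, f s) - L*t| ≤ M + ε/2 * t := key
    _ < ε * t := by nlinarith


noncomputable def Wf (μ : Measure ℝ) (E t : ℝ) : ℝ := (μ {E}).toReal + Rf μ E t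
noncomputable def Ff (μ : Measure ℝ) (E t : ℝ) : ℝ := ∫ s in (0:ℝ)..t, Wf μ E (t - s) * Wf μ E s
noncomputable def Gf (μ : Measure ℝ) (E t : ℝ) : ℝ := ∫ s in (0:ℝ)..t, Wf μ E (t - s) * Ff μ E s
noncomputable def Ibar (μ : Measure ℝ) (E t : ℝ) : ℝ := ∫ s in (0:ℝ)..t, I1 μ E s
noncomputable def SIf (μ : Measure ℝ) (E t : ℝ) : ℝ := ∫ s in (0:ℝ)..t, Sf μ E s
noncomputable def Jf (μ : Measure ℝ) (E t : ℝ) : ℝ := ∫ s in (0:ℝ)..t, s * Rf μ E s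
noncomputable def K1 (μ : Measure ℝ) (E t : ℝ) : ℝ := ∫ s in (0:ℝ)..t, Rf μ E (t - s) * I1 μ E s
noncomputable def K2 (μ : Measure ℝ) (E t : ℝ) : ℝ := ∫ s in (0:ℝ)..t, Rf μ E (t - s) * Sf μ E s

lemma I1_measurable [IsFiniteMeasure μ] : Measurable (I1 μ E) := I1_mono.measurable

lemma I1_intervalIntegrable [IsFiniteMeasure μ] (c d : ℝ) :
    IntervalIntegrable (I1 μ E) volume c d := (I1_mono.monotoneOn _).intervalIntegrable

lemma Ff_eq [IsProbabilityMeasure μ] {t : ℝ} (ht : 0 ≤ t) :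
    Ff μ E t = (μ {E}).toReal^2 * t + 2 * (μ {E}).toReal * I1 μ E t + Sf μ E t := by
  set a := (μ {E}).toReal with hadef
  have hcongr : Ff μ E t = ∫ s in (0:ℝ)..t,
      (a*a + (a * Rf μ E s + (Rf μ E (t-s) * a + Rf μ E (t-s) * Rf μ E s))) := by
    rw [Ff]
    refine intervalIntegral.integral_congr (fun s _ => ?_)
    rw [Wf, Wf, ← hadef]
    ring
  rw [hcongr]
  have i1 : IntervalIntegrable (fun _ : ℝ => a*a) volume 0 t := intervalIntegrable_const
  have i2 : IntervalIntegrable (fun s => a * Rf μ E s) volume 0 t :=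
    (Rf_intervalIntegrable 0 t).const_mul a
  have i3 : IntervalIntegrable (fun s => Rf μ E (t-s) * a) volume 0 t :=
    (Rf_comp_sub_intervalIntegrable t 0 t).mul_const a
  have i4 := RR_intervalIntegrable (μ := μ) (E := E) t 0 t
  rw [intervalIntegral.integral_add i1 (i2.add (i3.add i4)),
    intervalIntegral.integral_add i2 (i3.add i4),
    intervalIntegral.integral_add i3 i4]
  have h3 : (∫ s in (0:ℝ)..t, Rf μ E (t-s) * a) = I1 μ E t * a := by
    rw [show (fun s => Rf μ E (t-s) * a) = (fun s => (fun u => Rf μ E u * a) (t - s)) from rfl,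
      intervalIntegral.integral_comp_sub_left (fun u => Rf μ E u * a) t,
      show t - t = (0:ℝ) from by ring, show t - 0 = t from by ring,
      intervalIntegral.integral_mul_const, I1]
  rw [h3, ← Sf_eq_interval ht, intervalIntegral.integral_const,
    intervalIntegral.integral_const_mul, ← I1]
  simp only [smul_eq_mul]
  ring

lemma tRf_intervalIntegrable [IsProbabilityMeasure μ] {c d : ℝ} (hc : 0 ≤ c) (hcd : c ≤ d) :
    IntervalIntegrable (fun s => s * Rf μ E s) volume c d := by
  refine intervalIntegrable_of_bdd (C := d)
    ((measurable_id.mul (Rf_measurable (μ := μ) (E := E))).aestronglyMeasurable)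
    (fun s hs => ?_)
  rw [Set.uIoc_of_le hcd] at hs
  have hs0 : 0 < s := lt_of_le_of_lt hc hs.1
  rw [abs_of_nonneg (mul_nonneg hs0.le (Rf_nonneg s))]
  calc s * Rf μ E s ≤ s * 1 := mul_le_mul_of_nonneg_left (Rf_le_one s) hs0.le
    _ ≤ d := by rw [mul_one]; exact hs.2

lemma Sf_intervalIntegrable [IsProbabilityMeasure μ] {c d : ℝ} (hc : 0 ≤ c) (hcd : c ≤ d) :
    IntervalIntegrable (Sf μ E) volume c d := by
  refine intervalIntegrable_of_bdd (C := I1 μ E d)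
    ((Sf_measurable (μ := μ) (E := E)).aestronglyMeasurable) (fun s hs => ?_)
  rw [Set.uIoc_of_le hcd] at hs
  have hs0 : 0 < s := lt_of_le_of_lt hc hs.1
  rw [abs_of_nonneg (Sf_nonneg s)]
  exact le_trans (Sf_le_I1 hs0.le) (I1_mono hs.2)

lemma Gf_eq [IsProbabilityMeasure μ] {t : ℝ} (ht : 0 ≤ t) :
    Gf μ E t = (μ {E}).toReal^3 * t^2/2 + 2*(μ {E}).toReal^2 * Ibar μ E t
      + (μ {E}).toReal * SIf μ E t
      + (μ {E}).toReal^2 * (t * I1 μ E t - Jf μ E t)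
      + 2*(μ {E}).toReal * K1 μ E t + K2 μ E t := by
  set a := (μ {E}).toReal with hadef
  have hcongr : Gf μ E t = ∫ s in (0:ℝ)..t,
      (a^3 * s + (2*a^2 * I1 μ E s + (a * Sf μ E s + (a^2 * (Rf μ E (t-s) * s)
        + (2*a * (Rf μ E (t-s) * I1 μ E s) + Rf μ E (t-s) * Sf μ E s))))) := by
    rw [Gf]
    refine intervalIntegral.integral_congr (fun s hs => ?_)
    rw [Set.uIcc_of_le ht] at hs
    rw [Wf, Ff_eq hs.1, ← hadef]
    ring
  rw [hcongr]
  have hm1 : Measurable fun s => Rf μ E (t - s) :=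
    (Rf_measurable (μ := μ) (E := E)).comp (measurable_const.sub measurable_id)
  have j1 : IntervalIntegrable (fun s : ℝ => a^3 * s) volume 0 t :=
    (continuous_id.intervalIntegrable 0 t).const_mul _
  have j2 : IntervalIntegrable (fun s => 2*a^2 * I1 μ E s) volume 0 t :=
    (I1_intervalIntegrable 0 t).const_mul _
  have j3 : IntervalIntegrable (fun s => a * Sf μ E s) volume 0 t :=
    (Sf_intervalIntegrable le_rfl ht).const_mul _
  have j4 : IntervalIntegrable (fun s => a^2 * (Rf μ E (t-s) * s)) volume 0 t := by
    refine IntervalIntegrable.const_mul ?_ _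
    refine intervalIntegrable_of_bdd (C := t)
      ((hm1.mul measurable_id).aestronglyMeasurable) (fun s hs => ?_)
    rw [Set.uIoc_of_le ht] at hs
    rw [abs_of_nonneg (mul_nonneg (Rf_nonneg _) hs.1.le)]
    calc Rf μ E (t-s) * s ≤ 1 * s := mul_le_mul_of_nonneg_right (Rf_le_one _) hs.1.le
      _ ≤ t := by rw [one_mul]; exact hs.2
  have j5 : IntervalIntegrable (fun s => 2*a * (Rf μ E (t-s) * I1 μ E s)) volume 0 t := by
    refine IntervalIntegrable.const_mul ?_ _
    refine intervalIntegrable_of_bdd (C := I1 μ E t)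
      ((hm1.mul (I1_measurable (μ := μ) (E := E))).aestronglyMeasurable) (fun s hs => ?_)
    rw [Set.uIoc_of_le ht] at hs
    rw [abs_of_nonneg (mul_nonneg (Rf_nonneg _) (I1_nonneg hs.1.le))]
    calc Rf μ E (t-s) * I1 μ E s ≤ 1 * I1 μ E s :=
          mul_le_mul_of_nonneg_right (Rf_le_one _) (I1_nonneg hs.1.le)
      _ ≤ I1 μ E t := by rw [one_mul]; exact I1_mono hs.2
  have j6 : IntervalIntegrable (fun s => Rf μ E (t-s) * Sf μ E s) volume 0 t := by
    refine intervalIntegrable_of_bdd (C := I1 μ E t)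
      ((hm1.mul (Sf_measurable (μ := μ) (E := E))).aestronglyMeasurable) (fun s hs => ?_)
    rw [Set.uIoc_of_le ht] at hs
    rw [abs_of_nonneg (mul_nonneg (Rf_nonneg _) (Sf_nonneg _))]
    calc Rf μ E (t-s) * Sf μ E s ≤ 1 * Sf μ E s :=
          mul_le_mul_of_nonneg_right (Rf_le_one _) (Sf_nonneg _)
      _ ≤ I1 μ E t := by
          rw [one_mul]; exact le_trans (Sf_le_I1 hs.1.le) (I1_mono hs.2)
  rw [intervalIntegral.integral_add j1 (j2.add (j3.add (j4.add (j5.add j6)))),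
    intervalIntegral.integral_add j2 (j3.add (j4.add (j5.add j6))),
    intervalIntegral.integral_add j3 (j4.add (j5.add j6)),
    intervalIntegral.integral_add j4 (j5.add j6),
    intervalIntegral.integral_add j5 j6]
  have v1 : (∫ s in (0:ℝ)..t, a^3 * s) = a^3 * (t^2/2) := by
    rw [intervalIntegral.integral_const_mul, integral_id]
    ring
  have v4 : (∫ s in (0:ℝ)..t, a^2 * (Rf μ E (t-s) * s)) = a^2 * (t * I1 μ E t - Jf μ E t) := by
    rw [intervalIntegral.integral_const_mul]
    have hc1 : ∀ s ∈ Set.uIcc (0:ℝ) t, Rf μ E (t-s) * s = (fun u => Rf μ E u * (t - u)) (t - s) := by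
      intro s _
      simp only []
      congr 1
      ring
    rw [intervalIntegral.integral_congr hc1,
      intervalIntegral.integral_comp_sub_left (fun u => Rf μ E u * (t - u)) t,
      show t - t = (0:ℝ) from by ring, show t - 0 = t from by ring]
    have hc2 : ∀ u ∈ Set.uIcc (0:ℝ) t, Rf μ E u * (t - u) = t * Rf μ E u - u * Rf μ E u := by
      intro u _; ring
    rw [intervalIntegral.integral_congr hc2,
      intervalIntegral.integral_sub ((Rf_intervalIntegrable 0 t).const_mul t)
        (tRf_intervalIntegrable le_rfl ht),
      intervalIntegral.integral_const_mul, ← I1, ← Jf]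
  rw [v1, v4, intervalIntegral.integral_const_mul, intervalIntegral.integral_const_mul,
    intervalIntegral.integral_const_mul, ← Ibar, ← SIf, ← K1, ← K2]
  ring

lemma sRf_le [IsFiniteMeasure μ]
    (hint : IntegrableOn (fun x => (x - E)⁻¹) (Set.Ioi E) μ) {s : ℝ} (hs : 0 ≤ s) :
    s * Rf μ E s ≤ ∫ x in Ioi E, (x - E)⁻¹ ∂μ := by
  have heq : s * Rf μ E s = ∫ x in Ioi E, s * Real.exp (-(max s 0 * (x - E))) ∂μ := by
    rw [Rf]; exact (MeasureTheory.integral_const_mul s _).symm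
  rw [heq]
  refine setIntegral_mono_on ((integrableOn_exp (E := E) s).const_mul s) hint
    measurableSet_Ioi (fun x hx => ?_)
  simp only [mem_Ioi] at hx
  rw [max_eq_left hs]
  exact exp_bound_aux hs (by linarith)

lemma K1_nonneg [IsFiniteMeasure μ] {t : ℝ} (ht : 0 ≤ t) : 0 ≤ K1 μ E t :=
  intervalIntegral.integral_nonneg ht
    (fun s hs => mul_nonneg (Rf_nonneg _) (I1_nonneg hs.1))

lemma K2_nonneg [IsFiniteMeasure μ] {t : ℝ} (ht : 0 ≤ t) : 0 ≤ K2 μ E t :=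
  intervalIntegral.integral_nonneg ht
    (fun s _ => mul_nonneg (Rf_nonneg _) (Sf_nonneg _))

lemma RI_le_aux [IsProbabilityMeasure μ]
    (hint : IntegrableOn (fun x => (x - E)⁻¹) (Set.Ioi E) μ) {t : ℝ} (ht : 0 ≤ t)
    {g : ℝ → ℝ} (hgii : IntervalIntegrable (fun s => Rf μ E (t - s) * g s) volume 0 t)
    (hg : ∀ s, 0 ≤ s → s ≤ t → g s ≤ ∫ x in Ioi E, (x - E)⁻¹ ∂μ) :
    (∫ s in (0:ℝ)..t, Rf μ E (t - s) * g s)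
      ≤ (∫ x in Ioi E, (x - E)⁻¹ ∂μ) * (∫ x in Ioi E, (x - E)⁻¹ ∂μ) := by
  set Itot := ∫ x in Ioi E, (x - E)⁻¹ ∂μ with hItot
  have step : (∫ s in (0:ℝ)..t, Rf μ E (t - s) * g s)
      ≤ ∫ s in (0:ℝ)..t, Rf μ E (t - s) * Itot := by
    refine intervalIntegral.integral_mono_on ht hgii
      ((Rf_comp_sub_intervalIntegrable t 0 t).mul_const _) (fun s hs => ?_)
    exact mul_le_mul_of_nonneg_left (hg s hs.1 hs.2) (Rf_nonneg _)
  have hval : (∫ s in (0:ℝ)..t, Rf μ E (t - s) * Itot) = I1 μ E t * Itot := by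
    rw [intervalIntegral.integral_mul_const,
      intervalIntegral.integral_comp_sub_left (Rf μ E) t,
      show t - t = (0:ℝ) from by ring, show t - 0 = t from by ring, ← I1]
  rw [hval] at step
  have hI0 : 0 ≤ Itot := setIntegral_nonneg measurableSet_Ioi
    (fun x hx => inv_nonneg.2 (by simp only [mem_Ioi] at hx; linarith))
  exact le_trans step (mul_le_mul_of_nonneg_right (I1_le hint ht) hI0)

lemma K1_le [IsProbabilityMeasure μ]
    (hint : IntegrableOn (fun x => (x - E)⁻¹) (Set.Ioi E) μ) {t : ℝ} (ht : 0 ≤ t) :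
    K1 μ E t ≤ (∫ x in Ioi E, (x - E)⁻¹ ∂μ) * (∫ x in Ioi E, (x - E)⁻¹ ∂μ) := by
  rw [K1]
  refine RI_le_aux hint ht ?_ (fun s hs _ => I1_le hint hs)
  have hm1 : Measurable fun s => Rf μ E (t - s) :=
    (Rf_measurable (μ := μ) (E := E)).comp (measurable_const.sub measurable_id)
  refine intervalIntegrable_of_bdd (C := I1 μ E t)
    ((hm1.mul (I1_measurable (μ := μ) (E := E))).aestronglyMeasurable) (fun s hs => ?_)
  rw [Set.uIoc_of_le ht] at hs
  rw [abs_of_nonneg (mul_nonneg (Rf_nonneg _) (I1_nonneg hs.1.le))]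
  calc Rf μ E (t-s) * I1 μ E s ≤ 1 * I1 μ E s :=
        mul_le_mul_of_nonneg_right (Rf_le_one _) (I1_nonneg hs.1.le)
    _ ≤ I1 μ E t := by rw [one_mul]; exact I1_mono hs.2

lemma K2_le [IsProbabilityMeasure μ]
    (hint : IntegrableOn (fun x => (x - E)⁻¹) (Set.Ioi E) μ) {t : ℝ} (ht : 0 ≤ t) :
    K2 μ E t ≤ (∫ x in Ioi E, (x - E)⁻¹ ∂μ) * (∫ x in Ioi E, (x - E)⁻¹ ∂μ) := by
  rw [K2]
  refine RI_le_aux hint ht ?_ (fun s hs hst => le_trans (Sf_le_I1 hs) (I1_le hint hs))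
  have hm1 : Measurable fun s => Rf μ E (t - s) :=
    (Rf_measurable (μ := μ) (E := E)).comp (measurable_const.sub measurable_id)
  refine intervalIntegrable_of_bdd (C := I1 μ E t)
    ((hm1.mul (Sf_measurable (μ := μ) (E := E))).aestronglyMeasurable) (fun s hs => ?_)
  rw [Set.uIoc_of_le ht] at hs
  rw [abs_of_nonneg (mul_nonneg (Rf_nonneg _) (Sf_nonneg _))]
  calc Rf μ E (t-s) * Sf μ E s ≤ 1 * Sf μ E s :=
        mul_le_mul_of_nonneg_right (Rf_le_one _) (Sf_nonneg _)
    _ ≤ I1 μ E t := by rw [one_mul]; exact le_trans (Sf_le_I1 hs.1.le) (I1_mono hs.2)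

lemma W_integral_eq [IsProbabilityMeasure μ] (hE0 : μ (Set.Iio E) = 0) {τ : ℝ} (hτ : 0 ≤ τ) :
    (∫ x, Real.exp (-(τ * (x - E))) ∂μ) = Wf μ E τ := by
  have haeE : ∀ᵐ x ∂μ, E ≤ x := by
    have hset : {x : ℝ | ¬ E ≤ x} = Set.Iio E := by ext x; simp [not_le]
    rw [ae_iff, hset]
    exact hE0
  have hInt : Integrable (fun x => Real.exp (-(τ * (x - E)))) μ := by
    refine Integrable.mono' (integrable_const 1)
      (Continuous.aestronglyMeasurable (by fun_prop)) ?_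
    filter_upwards [haeE] with x hx
    rw [Real.norm_eq_abs, abs_of_pos (exp_pos _)]
    exact exp_le_one_iff.2 (neg_nonpos.2 (mul_nonneg hτ (by linarith)))
  have hsplit := MeasureTheory.integral_add_compl (measurableSet_Iic (a := E)) hInt
  rw [compl_Iic] at hsplit
  have h1 : (∫ x in Iic E, Real.exp (-(τ * (x - E))) ∂μ) = (μ {E}).toReal := by
    have hae : Set.Iic E =ᵐ[μ] ({E} : Set ℝ) := by
      refine MeasureTheory.ae_eq_set.2 ⟨?_, ?_⟩
      · rw [Set.Iic_diff_right]; exact hE0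
      · have : ({E} : Set ℝ) \ Iic E = ∅ := by
          apply Set.diff_eq_empty.2; intro x hx; simp at hx; simp [hx]
        rw [this]; simp
    rw [setIntegral_congr_set hae, integral_singleton]
    simp; rfl
  have h2 : (∫ x in Ioi E, Real.exp (-(τ * (x - E))) ∂μ) = Rf μ E τ := by
    rw [Rf, max_eq_left hτ]
  rw [h1, h2] at hsplit
  rw [Wf]
  exact hsplit.symm

lemma lapZ_eq [IsProbabilityMeasure μ] (hE0 : μ (Set.Iio E) = 0) {τ : ℝ} (hτ : 0 ≤ τ) :
    lapZ μ τ = Real.exp (-(τ * E)) * Wf μ E τ := by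
  rw [← W_integral_eq hE0 hτ, lapZ, ← MeasureTheory.integral_const_mul]
  refine integral_congr_ae (ae_of_all _ (fun x => ?_))
  simp only []
  rw [← Real.exp_add]
  congr 1
  ring

lemma Wf_pos [IsFiniteMeasure μ] (hatom : 0 < μ {E}) (τ : ℝ) : 0 < Wf μ E τ := by
  rw [Wf]
  have ha : 0 < (μ {E}).toReal := ENNReal.toReal_pos hatom.ne' (measure_ne_top μ _)
  linarith [Rf_nonneg (μ := μ) (E := E) τ]


end Stmt6

open Stmt6

/-- If `μ({E}) > 0` and `∫_{(E,∞)} (x-E)⁻¹ dμ < ∞`, then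
`∫_{(E,∞)} (x-E)⁻¹ dμ` equals the limit as `t → ∞` of
`[2 ∫₀ᵗ∫₀ˢ Z_{t-s}Z_{s-r}Z_r/Z_t dr ds − (∫₀ᵗ Z_{t-s}Z_s/Z_t ds)²] / [2 ∫₀ᵗ Z_{t-s}Z_s/Z_t ds]`. -/
theorem stmt_6 (μ : Measure ℝ) [IsProbabilityMeasure μ] (E : ℝ)
    (hE0 : μ (Set.Iio E) = 0) (hE1 : ∀ ε : ℝ, 0 < ε → 0 < μ (Set.Ico E (E + ε)))
    (hatom : 0 < μ {E})
    (hint : IntegrableOn (fun x => (x - E)⁻¹) (Set.Ioi E) μ) :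
    Tendsto (fun t =>
        (2 * (∫ s in (0:ℝ)..t, ∫ r in (0:ℝ)..s,
            lapZ μ (t - s) * lapZ μ (s - r) * lapZ μ r / lapZ μ t)
          - (∫ s in (0:ℝ)..t, lapZ μ (t - s) * lapZ μ s / lapZ μ t) ^ 2)
        / (2 * ∫ s in (0:ℝ)..t, lapZ μ (t - s) * lapZ μ s / lapZ μ t))
      atTop (nhds (∫ x in Set.Ioi E, (x - E)⁻¹ ∂μ)) := by
  set a := (μ {E}).toReal with hadef
  have ha : 0 < a := ENNReal.toReal_pos hatom.ne' (measure_ne_top μ _)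
  set Itot := ∫ x in Set.Ioi E, (x - E)⁻¹ ∂μ with hItotdef
  have hI0 : 0 ≤ Itot := setIntegral_nonneg measurableSet_Ioi
    (fun x hx => inv_nonneg.2 (by simp only [mem_Ioi] at hx; linarith))
  -- basic limits
  have hRf0 : Tendsto (Rf μ E) atTop (nhds 0) := tendsto_Rf
  have htRf : Tendsto (fun t => t * Rf μ E t) atTop (nhds 0) := tendsto_t_Rf hint
  have hI1t : Tendsto (I1 μ E) atTop (nhds Itot) := tendsto_I1 hint
  have hSf0 : Tendsto (Sf μ E) atTop (nhds 0) := tendsto_Sf hint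
  have hIbar : Tendsto (fun t => Ibar μ E t / t) atTop (nhds Itot) := by
    unfold Ibar
    refine cesaro (C := Itot) (fun c d hc hcd => I1_intervalIntegrable c d)
      (fun s hs => ?_) hI1t
    rw [abs_of_nonneg (I1_nonneg hs)]
    exact I1_le hint hs
  have hSI : Tendsto (fun t => SIf μ E t / t) atTop (nhds 0) := by
    unfold SIf
    refine cesaro (C := Itot) (fun c d hc hcd => Sf_intervalIntegrable hc hcd)
      (fun s hs => ?_) hSf0
    rw [abs_of_nonneg (Sf_nonneg s)]
    exact le_trans (Sf_le_I1 hs) (I1_le hint hs)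
  have hJf : Tendsto (fun t => Jf μ E t / t) atTop (nhds 0) := by
    unfold Jf
    refine cesaro (C := Itot) (fun c d hc hcd => tRf_intervalIntegrable hc hcd)
      (fun s hs => ?_) htRf
    rw [abs_of_nonneg (mul_nonneg hs (Rf_nonneg s))]
    exact sRf_le hint hs
  have hK1t : Tendsto (fun t => K1 μ E t / t) atTop (nhds 0) := by
    refine squeeze_zero' ?_ ?_ ((tendsto_const_nhds (x := Itot * Itot)).div_atTop tendsto_id)
    · filter_upwards [eventually_ge_atTop (0:ℝ)] with t ht
      exact div_nonneg (K1_nonneg ht) ht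
    · filter_upwards [eventually_ge_atTop (1:ℝ)] with t ht
      have h0 : (0:ℝ) < t := by linarith
      exact (div_le_div_iff_of_pos_right h0).2 (K1_le hint (by linarith))
  have hK2t : Tendsto (fun t => K2 μ E t / t) atTop (nhds 0) := by
    refine squeeze_zero' ?_ ?_ ((tendsto_const_nhds (x := Itot * Itot)).div_atTop tendsto_id)
    · filter_upwards [eventually_ge_atTop (0:ℝ)] with t ht
      exact div_nonneg (K2_nonneg ht) ht
    · filter_upwards [eventually_ge_atTop (1:ℝ)] with t ht
      have h0 : (0:ℝ) < t := by linarith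
      exact (div_le_div_iff_of_pos_right h0).2 (K2_le hint (by linarith))
  -- conversions of lapZ integrals
  have hWpos : ∀ τ : ℝ, 0 < Wf μ E τ := Wf_pos hatom
  have hWne : ∀ τ : ℝ, Wf μ E τ ≠ 0 := fun τ => (hWpos τ).ne'
  have hsingle : ∀ t : ℝ, 0 ≤ t →
      (∫ s in (0:ℝ)..t, lapZ μ (t - s) * lapZ μ s / lapZ μ t) = Ff μ E t / Wf μ E t := by
    intro t ht
    have hc : ∀ s ∈ Set.uIcc (0:ℝ) t, lapZ μ (t-s) * lapZ μ s / lapZ μ t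
        = Wf μ E (t-s) * Wf μ E s / Wf μ E t := by
      intro s hs
      rw [Set.uIcc_of_le ht] at hs
      rw [lapZ_eq hE0 (by linarith [hs.2] : (0:ℝ) ≤ t - s), lapZ_eq hE0 hs.1, lapZ_eq hE0 ht]
      have hexp : Real.exp (-((t-s)*E)) * Real.exp (-(s*E)) = Real.exp (-(t*E)) := by
        rw [← Real.exp_add]; congr 1; ring
      calc Real.exp (-((t-s)*E)) * Wf μ E (t-s) * (Real.exp (-(s*E)) * Wf μ E s)
            / (Real.exp (-(t*E)) * Wf μ E t)
          = (Real.exp (-((t-s)*E)) * Real.exp (-(s*E))) * (Wf μ E (t-s) * Wf μ E s)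
            / (Real.exp (-(t*E)) * Wf μ E t) := by ring
        _ = Real.exp (-(t*E)) * (Wf μ E (t-s) * Wf μ E s)
            / (Real.exp (-(t*E)) * Wf μ E t) := by rw [hexp]
        _ = Wf μ E (t-s) * Wf μ E s / Wf μ E t := mul_div_mul_left _ _ (Real.exp_ne_zero _)
    rw [intervalIntegral.integral_congr hc, intervalIntegral.integral_div, ← Ff]
  have hdouble : ∀ t : ℝ, 0 ≤ t → (∫ s in (0:ℝ)..t, ∫ r in (0:ℝ)..s,
      lapZ μ (t - s) * lapZ μ (s - r) * lapZ μ r / lapZ μ t) = Gf μ E t / Wf μ E t := by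
    intro t ht
    have hout : ∀ s ∈ Set.uIcc (0:ℝ) t, (∫ r in (0:ℝ)..s,
        lapZ μ (t - s) * lapZ μ (s - r) * lapZ μ r / lapZ μ t)
        = Wf μ E (t-s) * Ff μ E s / Wf μ E t := by
      intro s hs
      rw [Set.uIcc_of_le ht] at hs
      have hin : ∀ r ∈ Set.uIcc (0:ℝ) s, lapZ μ (t-s) * lapZ μ (s-r) * lapZ μ r / lapZ μ t
          = Wf μ E (t-s) / Wf μ E t * (Wf μ E (s-r) * Wf μ E r) := by
        intro r hr
        rw [Set.uIcc_of_le hs.1] at hr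
        rw [lapZ_eq hE0 (by linarith [hs.2] : (0:ℝ) ≤ t - s),
          lapZ_eq hE0 (by linarith [hr.2] : (0:ℝ) ≤ s - r), lapZ_eq hE0 hr.1, lapZ_eq hE0 ht]
        have hexp : Real.exp (-((t-s)*E)) * Real.exp (-((s-r)*E)) * Real.exp (-(r*E))
            = Real.exp (-(t*E)) := by
          rw [← Real.exp_add, ← Real.exp_add]; congr 1; ring
        calc Real.exp (-((t-s)*E)) * Wf μ E (t-s) * (Real.exp (-((s-r)*E)) * Wf μ E (s-r))
              * (Real.exp (-(r*E)) * Wf μ E r) / (Real.exp (-(t*E)) * Wf μ E t)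
            = (Real.exp (-((t-s)*E)) * Real.exp (-((s-r)*E)) * Real.exp (-(r*E)))
              * (Wf μ E (t-s) * (Wf μ E (s-r) * Wf μ E r))
              / (Real.exp (-(t*E)) * Wf μ E t) := by ring
          _ = Real.exp (-(t*E)) * (Wf μ E (t-s) * (Wf μ E (s-r) * Wf μ E r))
              / (Real.exp (-(t*E)) * Wf μ E t) := by rw [hexp]
          _ = Wf μ E (t-s) * (Wf μ E (s-r) * Wf μ E r) / Wf μ E t :=
              mul_div_mul_left _ _ (Real.exp_ne_zero _)
          _ = Wf μ E (t-s) / Wf μ E t * (Wf μ E (s-r) * Wf μ E r) := by ring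
      rw [intervalIntegral.integral_congr hin, intervalIntegral.integral_const_mul, ← Ff]
      ring
    rw [intervalIntegral.integral_congr hout, intervalIntegral.integral_div, ← Gf]
  -- lower bound for Ff
  have hFpos : ∀ t : ℝ, 1 ≤ t → 0 < Ff μ E t := by
    intro t ht
    have h0 : (0:ℝ) ≤ t := by linarith
    rw [Ff_eq h0, ← hadef]
    have h1 := I1_nonneg (μ := μ) (E := E) h0
    have h2 := Sf_nonneg (μ := μ) (E := E) t
    nlinarith
  -- numerator limit
  have hNum : Tendsto (fun t => (2 * Gf μ E t * Wf μ E t - (Ff μ E t)^2) / t) atTop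
      (nhds (2*a^3*Itot)) := by
    have hbr : Tendsto (fun t => 4*a^2*(Ibar μ E t/t) + 2*a*(SIf μ E t/t)
        + 2*a^2*(I1 μ E t) - 2*a^2*(Jf μ E t/t) + 4*a*(K1 μ E t/t) + 2*(K2 μ E t/t)) atTop
        (nhds (4*a^2*Itot + 2*a*0 + 2*a^2*Itot - 2*a^2*0 + 4*a*0 + 2*0)) :=
      (((((hIbar.const_mul _).add (hSI.const_mul _)).add (hI1t.const_mul _)).sub
        (hJf.const_mul _)).add (hK1t.const_mul _)).add (hK2t.const_mul _)
    have hq : Tendsto (fun t => (4*a^2*(I1 μ E t)^2 + 4*a*(I1 μ E t * Sf μ E t)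
        + (Sf μ E t)^2) / t) atTop (nhds 0) := by
      have hnum : Tendsto (fun t => 4*a^2*(I1 μ E t)^2 + 4*a*(I1 μ E t * Sf μ E t)
          + (Sf μ E t)^2) atTop (nhds (4*a^2*Itot^2 + 4*a*(Itot*0) + 0^2)) :=
        (((hI1t.pow 2).const_mul _).add ((hI1t.mul hSf0).const_mul _)).add (hSf0.pow 2)
      exact hnum.div_atTop tendsto_id
    have hphi : Tendsto (fun t => 4*a^3*(Ibar μ E t/t) + 2*a^2*(SIf μ E t/t)
        - 2*a^3*(Jf μ E t/t) + 4*a^2*(K1 μ E t/t) + 2*a*(K2 μ E t/t)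
        - 2*a^3*(I1 μ E t) + a^3*(t*Rf μ E t)
        + Rf μ E t * (4*a^2*(Ibar μ E t/t) + 2*a*(SIf μ E t/t)
            + 2*a^2*(I1 μ E t) - 2*a^2*(Jf μ E t/t) + 4*a*(K1 μ E t/t) + 2*(K2 μ E t/t))
        - 2*a^2*(Sf μ E t)
        - (4*a^2*(I1 μ E t)^2 + 4*a*(I1 μ E t * Sf μ E t) + (Sf μ E t)^2) / t) atTop
        (nhds (4*a^3*Itot + 2*a^2*0 - 2*a^3*0 + 4*a^2*0 + 2*a*0 - 2*a^3*Itot + a^3*0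
          + 0*(4*a^2*Itot + 2*a*0 + 2*a^2*Itot - 2*a^2*0 + 4*a*0 + 2*0) - 2*a^2*0 - 0)) :=
      (((((((((hIbar.const_mul _).add (hSI.const_mul _)).sub (hJf.const_mul _)).add
        (hK1t.const_mul _)).add (hK2t.const_mul _)).sub (hI1t.const_mul _)).add
        (htRf.const_mul _)).add (hRf0.mul hbr)).sub (hSf0.const_mul _)).sub hq
    have hL0 : 4*a^3*Itot + 2*a^2*0 - 2*a^3*0 + 4*a^2*0 + 2*a*0 - 2*a^3*Itot + a^3*0
          + 0*(4*a^2*Itot + 2*a*0 + 2*a^2*Itot - 2*a^2*0 + 4*a*0 + 2*0) - 2*a^2*0 - 0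
        = 2*a^3*Itot := by ring
    rw [hL0] at hphi
    refine Tendsto.congr' ?_ hphi
    filter_upwards [eventually_ge_atTop (1:ℝ)] with t ht
    have h0 : (0:ℝ) ≤ t := by linarith
    have htne : t ≠ 0 := by linarith
    rw [Gf_eq h0, Ff_eq h0, Wf, ← hadef]
    field_simp
    ring
  -- denominator limit
  have hDen : Tendsto (fun t => (2 * Ff μ E t * Wf μ E t) / t) atTop (nhds (2*a^3)) := by
    have hdiv : Tendsto (fun t => (2*a*(I1 μ E t) + Sf μ E t)/t) atTop (nhds 0) :=
      ((hI1t.const_mul (2*a)).add hSf0).div_atTop tendsto_id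
    have h1 : Tendsto (fun t => 2*(a^2 + (2*a*(I1 μ E t) + Sf μ E t)/t)*(a + Rf μ E t))
        atTop (nhds (2*(a^2 + 0)*(a + 0))) :=
      ((tendsto_const_nhds.add hdiv).const_mul 2).mul (tendsto_const_nhds.add hRf0)
    have h2 : 2*(a^2 + (0:ℝ))*(a+0) = 2*a^3 := by ring
    rw [h2] at h1
    refine Tendsto.congr' ?_ h1
    filter_upwards [eventually_ge_atTop (1:ℝ)] with t ht
    have h0 : (0:ℝ) ≤ t := by linarith
    have htne : t ≠ 0 := by linarith
    rw [Ff_eq h0, Wf, ← hadef]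
    have hWstar : (0:ℝ) < a + Rf μ E t := by linarith [Rf_nonneg (μ := μ) (E := E) t]
    field_simp
    ring
  -- ratio limit
  have hRatio : Tendsto (fun t => (2 * Gf μ E t * Wf μ E t - (Ff μ E t)^2)
      / (2 * Ff μ E t * Wf μ E t)) atTop (nhds Itot) := by
    have h2 := hNum.div hDen (by positivity : (2*a^3 : ℝ) ≠ 0)
    have hval : (2*a^3*Itot)/(2*a^3) = Itot := by
      field_simp
    rw [hval] at h2
    refine Tendsto.congr' ?_ h2
    filter_upwards [eventually_ge_atTop (1:ℝ)] with t ht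
    have htne : t ≠ 0 := by linarith
    simp only [Pi.div_apply]
    rw [div_div_div_comm, div_self htne, div_one]
  refine Tendsto.congr' ?_ hRatio
  filter_upwards [eventually_ge_atTop (1:ℝ)] with t ht
  have h0 : (0:ℝ) ≤ t := by linarith
  rw [hsingle t h0, hdouble t h0]
  have hW := hWne t
  have hF := (hFpos t ht).ne'
  field_simp
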